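/- Let n ∈ ℕ and let N ⊴ ℤ₂^{*n} be an sS_n-invariant normal subgroup. Define sS_∞(N) := {φ(x) : x ∈ N, φ ∈ sS_∞} and let N_∞ be the normal closure of sS_∞(N) in ℤ₂^{*∞}. Then C := {p ∈ P : p is a rotation of ker(i) for some k ∈ ℕ and some i with a_i ∈ N_∞} is a group-theoretical category of partitions with F_∞(C) = N_∞ and F_n(C) := F_∞(C) ∩ ℤ₂^{*n} = N. -/

import Mathlib

attribute [local instance] Classical.propDecidable

noncomputable section

namespace GTQG

/-! ## Partitions -/

/-- The set `P(k,l)` of partitions of `{1,…,k,1',…,l'}`, encoded as equivalence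
relations (i.e. set partitions) on the disjoint union `Fin k ⊕ Fin l`. -/
abbrev Part (k l : ℕ) : Type := Setoid (Fin k ⊕ Fin l)

/-- `ker(i,j)`: the partition whose blocks are the fibers of the labelling
`x ↦ i x` on upper points and `y ↦ j y` on lower points. -/
def kerPartA {α : Type*} {k l : ℕ} (i : Fin k → α) (j : Fin l → α) : Part k l :=
  Setoid.ker (Sum.elim i j)

/-- `ker(i,j)` for `ℕ`-valued multi-indices. -/
abbrev kerPart {k l : ℕ} (i : Fin k → ℕ) (j : Fin l → ℕ) : Part k l := kerPartA i j

/-- `ker(i) = ker(i,∅) ∈ P(k,0)`. -/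
def kerPart0 {k : ℕ} (i : Fin k → ℕ) : Part k 0 := kerPartA i Fin.elim0

/-- The pair partition `⊔ ∈ P(0,2)`. -/
def pairPart : Part 0 2 := kerPartA Fin.elim0 (fun _ => (1 : ℕ))

/-- The identity partition `| ∈ P(1,1)`. -/
def idPart : Part 1 1 := kerPartA (fun _ => (1 : ℕ)) (fun _ => (1 : ℕ))

/-- The partition `p̂ = ker((1,1,2),(2,1,1)) ∈ P(3,3)`. -/
def pHat : Part 3 3 := kerPart ![1, 1, 2] ![2, 1, 1]

/-- The involution `p* ∈ P(l,k)`, turning `p` upside-down. -/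
def invol {k l : ℕ} (p : Part k l) : Part l k := Setoid.comap Sum.swap p

/-- The number of blocks of a partition. -/
def blockCount {k l : ℕ} (p : Part k l) : ℕ := Nat.card (Quotient p)

/-- The restriction of `p` to its upper row. -/
def upperSetoid {k l : ℕ} (p : Part k l) : Setoid (Fin k) := Setoid.comap Sum.inl p

/-- The restriction of `p` to its lower row. -/
def lowerSetoid {k l : ℕ} (p : Part k l) : Setoid (Fin l) := Setoid.comap Sum.inr p

/-- `p ∈ P(k,l)` and `q ∈ P(l,l')` are compatible if the lower row of `p`
and the upper row of `q` have the same block structure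
(i.e. `j^(p) ∈ S_∞(i^(q))`). -/
def Compatible {k l l' : ℕ} (p : Part k l) (q : Part l l') : Prop :=
  lowerSetoid p = upperSetoid q

section Comp

variable {k l l' : ℕ}

/-- The points of the vertical concatenation of `p ∈ P(k,l)` and `q ∈ P(l,l')`:
`k` upper points, `l` middle points, `l'` lower points. -/
abbrev CompCarrier (k l l' : ℕ) : Type := Fin k ⊕ (Fin l ⊕ Fin l')

/-- Inclusion of the points of `p` into the vertical concatenation. -/
def topIncl : Fin k ⊕ Fin l → CompCarrier k l l' := Sum.map id Sum.inl

/-- Inclusion of the points of `q` into the vertical concatenation. -/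
def botIncl : Fin l ⊕ Fin l' → CompCarrier k l l' := Sum.inr

/-- Two points of the vertical concatenation are directly connected if they are
connected by a string of `p` or by a string of `q`. -/
def compRel (p : Part k l) (q : Part l l') :
    CompCarrier k l l' → CompCarrier k l l' → Prop := fun x y =>
  (∃ u v, p u v ∧ x = topIncl u ∧ y = topIncl v) ∨
  (∃ u v, q u v ∧ x = botIncl u ∧ y = botIncl v)

/-- The partition of all points of the vertical concatenation of `p` and `q`
into connected components. -/
def middleJoin (p : Part k l) (q : Part l l') : Setoid (CompCarrier k l l') :=
  Relation.EqvGen.setoid (compRel p q)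

/-- The composition `qp ∈ P(k,l')`: vertical concatenation with all loops removed. -/
def compPart (p : Part k l) (q : Part l l') : Part k l' :=
  Setoid.comap (Sum.map id Sum.inr) (middleJoin p q)

/-- A point of the vertical concatenation is a middle point. -/
def IsMiddle (x : CompCarrier k l l') : Prop := ∃ m : Fin l, x = Sum.inr (Sum.inl m)

/-- The number `l(q,p)` of loops in the vertical concatenation of `p` and `q`:
connected components consisting entirely of middle points. -/
def loopCount (p : Part k l) (q : Part l l') : ℕ :=
  Nat.card {c : Quotient (middleJoin p q) //
    ∀ x : CompCarrier k l l', Quotient.mk (middleJoin p q) x = c → IsMiddle x}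

end Comp

/-- The direct sum of two set partitions. -/
def sumSetoid {α β : Type*} (p : Setoid α) (q : Setoid β) : Setoid (α ⊕ β) :=
  Setoid.ker (Sum.map (Quotient.mk p) (Quotient.mk q))

/-- The tensor product `p ⊗ q ∈ P(k+k',l+l')`: horizontal concatenation. -/
def tensorPart {k l k' l' : ℕ} (p : Part k l) (q : Part k' l') : Part (k + k') (l + l') :=
  Setoid.comap
    (Sum.elim
      (fun z => Fin.addCases (fun a => Sum.inl (Sum.inl a)) (fun b => Sum.inr (Sum.inl b)) z)
      (fun z => Fin.addCases (fun a => Sum.inl (Sum.inr a)) (fun b => Sum.inr (Sum.inr b)) z))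
    (sumSetoid p q)

/-! ## Rotations -/

/-- Rotating the outermost left upper leg to the lower row (reindexing map). -/
def rotULDmap (k l : ℕ) : Fin k ⊕ Fin (l + 1) → Fin (k + 1) ⊕ Fin l
  | .inl x => .inl x.succ
  | .inr y => Fin.cases (Sum.inl 0) (fun i => Sum.inr i) y

/-- Rotating the outermost left upper leg to the lower row. -/
def rotULD {k l : ℕ} (p : Part (k + 1) l) : Part k (l + 1) :=
  Setoid.comap (rotULDmap k l) p

/-- Rotating the outermost left lower leg to the upper row (reindexing map). -/
def rotDLUmap (k l : ℕ) : Fin (k + 1) ⊕ Fin l → Fin k ⊕ Fin (l + 1)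
  | .inl x => Fin.cases (Sum.inr 0) (fun i => Sum.inl i) x
  | .inr y => .inr y.succ

/-- Rotating the outermost left lower leg to the upper row. -/
def rotDLU {k l : ℕ} (p : Part k (l + 1)) : Part (k + 1) l :=
  Setoid.comap (rotDLUmap k l) p

/-- Rotating the outermost right upper leg to the lower row (reindexing map). -/
def rotURDmap (k l : ℕ) : Fin k ⊕ Fin (l + 1) → Fin (k + 1) ⊕ Fin l
  | .inl x => .inl x.castSucc
  | .inr y => Fin.lastCases (Sum.inl (Fin.last k)) (fun i => Sum.inr i) y

/-- Rotating the outermost right upper leg to the lower row. -/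
def rotURD {k l : ℕ} (p : Part (k + 1) l) : Part k (l + 1) :=
  Setoid.comap (rotURDmap k l) p

/-- Rotating the outermost right lower leg to the upper row (reindexing map). -/
def rotDRUmap (k l : ℕ) : Fin (k + 1) ⊕ Fin l → Fin k ⊕ Fin (l + 1)
  | .inl x => Fin.lastCases (Sum.inr (Fin.last l)) (fun i => Sum.inl i) x
  | .inr y => .inr y.castSucc

/-- Rotating the outermost right lower leg to the upper row. -/
def rotDRU {k l : ℕ} (p : Part k (l + 1)) : Part (k + 1) l :=
  Setoid.comap (rotDRUmap k l) p

/-- One basic rotation step between partitions (with varying numbers of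
upper and lower points). -/
inductive BasicRot : (Σ k l : ℕ, Part k l) → (Σ k l : ℕ, Part k l) → Prop
  | uld {k l : ℕ} (p : Part (k + 1) l) : BasicRot ⟨k + 1, l, p⟩ ⟨k, l + 1, rotULD p⟩
  | dlu {k l : ℕ} (p : Part k (l + 1)) : BasicRot ⟨k, l + 1, p⟩ ⟨k + 1, l, rotDLU p⟩
  | urd {k l : ℕ} (p : Part (k + 1) l) : BasicRot ⟨k + 1, l, p⟩ ⟨k, l + 1, rotURD p⟩
  | dru {k l : ℕ} (p : Part k (l + 1)) : BasicRot ⟨k, l + 1, p⟩ ⟨k + 1, l, rotDRU p⟩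

/-- `IsRotationOf q p`: `q` is obtained from `p` by finitely many basic rotations. -/
def IsRotationOf (q p : Σ k l : ℕ, Part k l) : Prop := Relation.ReflTransGen BasicRot p q

/-- A family `R ⊆ P` is closed under rotation. -/
def RotationClosed (R : ∀ k l : ℕ, Set (Part k l)) : Prop :=
  ∀ {k l k' l' : ℕ} (p : Part k l) (q : Part k' l'),
    p ∈ R k l → IsRotationOf ⟨k', l', q⟩ ⟨k, l, p⟩ → q ∈ R k' l'

/-! ## (Skew) categories of partitions -/

/-- A skew category of partitions: a collection `R ⊆ P` containing `⊔` and `|`,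
closed under involution, connected tensor products and conditioned composition. -/
structure IsSkewCategory (R : ∀ k l : ℕ, Set (Part k l)) : Prop where
  pair_mem : pairPart ∈ R 0 2
  id_mem : idPart ∈ R 1 1
  invol_mem : ∀ {k l : ℕ} {p : Part k l}, p ∈ R k l → invol p ∈ R l k
  conn_tensor_mem : ∀ {k l k' l' : ℕ} {p : Part k l} {q : Part k' l'}
      (i : Fin k → ℕ) (j : Fin l → ℕ) (f : Fin k' → ℕ) (g : Fin l' → ℕ),
      p ∈ R k l → q ∈ R k' l' → kerPart i j = p → kerPart f g = q →
      kerPart (Fin.append i f) (Fin.append j g) ∈ R (k + k') (l + l')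
  cond_comp_mem : ∀ {k l l' : ℕ} {p : Part k l} {q : Part l l'},
      p ∈ R k l → q ∈ R l l' → Compatible p q → compPart p q ∈ R k l'

/-- A category of partitions: a collection `C ⊆ P` containing `⊔` and `|`,
closed under involution, tensor products and composition. -/
structure IsCategoryOfPartitions (C : ∀ k l : ℕ, Set (Part k l)) : Prop where
  pair_mem : pairPart ∈ C 0 2
  id_mem : idPart ∈ C 1 1
  invol_mem : ∀ {k l : ℕ} {p : Part k l}, p ∈ C k l → invol p ∈ C l k
  tensor_mem : ∀ {k l k' l' : ℕ} {p : Part k l} {q : Part k' l'},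
      p ∈ C k l → q ∈ C k' l' → tensorPart p q ∈ C (k + k') (l + l')
  comp_mem : ∀ {k l l' : ℕ} {p : Part k l} {q : Part l l'},
      p ∈ C k l → q ∈ C l l' → compPart p q ∈ C k l'

/-- The skew category of partitions generated by a family `E`. -/
def skewGenerated (E : ∀ k l : ℕ, Set (Part k l)) : ∀ k l : ℕ, Set (Part k l) :=
  fun k l => { p | ∀ R : ∀ k l : ℕ, Set (Part k l),
    IsSkewCategory R → (∀ k' l' : ℕ, E k' l' ⊆ R k' l') → p ∈ R k l }

/-- The category of partitions generated by a family `E`. -/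
def catGenerated (E : ∀ k l : ℕ, Set (Part k l)) : ∀ k l : ℕ, Set (Part k l) :=
  fun k l => { p | ∀ C : ∀ k l : ℕ, Set (Part k l),
    IsCategoryOfPartitions C → (∀ k' l' : ℕ, E k' l' ⊆ C k' l') → p ∈ C k l }

end GTQG
namespace GTQG

/-! ## The free products `ℤ₂^{*∞}` and `ℤ₂^{*n}` -/

/-- The cyclic group of order two (written multiplicatively). -/
abbrev Z2 : Type := Multiplicative (ZMod 2)

/-- `ℤ₂^{*∞}`, the free product of countably many copies of `ℤ₂`. -/
abbrev FreeZ2 : Type := Monoid.CoprodI (fun _ : ℕ => Z2)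

/-- `ℤ₂^{*n}`, the free product of `n` copies of `ℤ₂`. -/
abbrev FreeZ2n (n : ℕ) : Type := Monoid.CoprodI (fun _ : Fin n => Z2)

/-- The generator `a_i` of `ℤ₂^{*∞}`. -/
def gen (i : ℕ) : FreeZ2 := Monoid.CoprodI.of (i := i) (Multiplicative.ofAdd (1 : ZMod 2))

/-- The generator `a_i` of `ℤ₂^{*n}`. -/
def genn {n : ℕ} (i : Fin n) : FreeZ2n n :=
  Monoid.CoprodI.of (i := i) (Multiplicative.ofAdd (1 : ZMod 2))

/-- The word `a_i = a_{i₁} ⋯ a_{i_k} ∈ ℤ₂^{*∞}` associated to a multi-index. -/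
def aWord {k : ℕ} (i : Fin k → ℕ) : FreeZ2 := (List.ofFn fun x => gen (i x)).prod

/-- The word `a_i = a_{i₁} ⋯ a_{i_k} ∈ ℤ₂^{*n}` associated to a multi-index. -/
def aWordn {n k : ℕ} (i : Fin k → Fin n) : FreeZ2n n := (List.ofFn fun x => genn (i x)).prod

/-- The natural embedding `ℤ₂^{*n} → ℤ₂^{*∞}`. -/
def incl (n : ℕ) : FreeZ2n n →* FreeZ2 :=
  Monoid.CoprodI.lift (fun i => Monoid.CoprodI.of (M := fun _ : ℕ => Z2) (i := (i : ℕ)))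

/-- The endomorphism of `ℤ₂^{*∞}` induced by a map `σ : ℕ → ℕ`, `a_i ↦ a_{σ i}`.
For bijective `σ` this is the action of `S_∞`, in general that of `sS_∞`. -/
def permEndo (σ : ℕ → ℕ) : FreeZ2 →* FreeZ2 :=
  Monoid.CoprodI.lift (fun i => Monoid.CoprodI.of (M := fun _ : ℕ => Z2) (i := σ i))

/-- The endomorphism of `ℤ₂^{*n}` induced by a map `σ : Fin n → Fin n`. -/
def permEndon {n : ℕ} (σ : Fin n → Fin n) : FreeZ2n n →* FreeZ2n n :=
  Monoid.CoprodI.lift (fun i => Monoid.CoprodI.of (M := fun _ : Fin n => Z2) (i := σ i))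

/-- A map `ℕ → ℕ` is finitely supported (moves only finitely many points). -/
def FinitelySupported (σ : ℕ → ℕ) : Prop := {x | σ x ≠ x}.Finite

/-- `F_∞(D) = S_∞({a_{ind(p)} : p ∈ D(k,0)})`, the set of all words `a_i` with
`ker(i) ∈ D(k,0)` (the `S_∞`-orbit of the words of minimal-index labellings). -/
def Finfty (D : ∀ k l : ℕ, Set (Part k l)) : Set FreeZ2 :=
  { g | ∃ (k : ℕ) (i : Fin k → ℕ), kerPart0 i ∈ D k 0 ∧ g = aWord i }

end GTQG
namespace GTQG

/-! ## The maps `T̂_p` and `T_p` -/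

/-- `(ℂ^n)^{⊗k}`, realised as functions on multi-indices (the standard basis
`e_{i₁} ⊗ ⋯ ⊗ e_{i_k}` is indexed by multi-indices `i ∈ {1,…,n}^k`). -/
abbrev MV (n k : ℕ) : Type := (Fin k → Fin n) → ℂ

/-- `δ̂_p(i,j) = 1` iff `(i,j) ∈ S_∞(ind(p))`, i.e. iff `ker(i,j) = p`. -/
def hatDelta {k l : ℕ} (p : Part k l) {n : ℕ} (i : Fin k → Fin n) (j : Fin l → Fin n) : ℂ :=
  if kerPartA i j = p then 1 else 0

/-- `δ_p(i,j) = 1` iff `(i,j) ∈ sS_∞(ind(p))`, i.e. iff the labelling `(i,j)`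
is constant on the blocks of `p`. -/
def softDelta {k l : ℕ} (p : Part k l) {n : ℕ} (i : Fin k → Fin n) (j : Fin l → Fin n) : ℂ :=
  if p ≤ kerPartA i j then 1 else 0

/-- The linear map `T̂_p^(n) : (ℂ^n)^{⊗k} → (ℂ^n)^{⊗l}`. -/
def hatT (n : ℕ) {k l : ℕ} (p : Part k l) : MV n k →ₗ[ℂ] MV n l :=
  Matrix.mulVecLin (Matrix.of fun (j : Fin l → Fin n) (i : Fin k → Fin n) => hatDelta p i j)

/-- The linear map `T_p^(n) : (ℂ^n)^{⊗k} → (ℂ^n)^{⊗l}` of Banica–Speicher. -/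
def softT (n : ℕ) {k l : ℕ} (p : Part k l) : MV n k →ₗ[ℂ] MV n l :=
  Matrix.mulVecLin (Matrix.of fun (j : Fin l → Fin n) (i : Fin k → Fin n) => softDelta p i j)

/-- The tensor product of linear maps, under the identification
`(ℂ^n)^{⊗k} ⊗ (ℂ^n)^{⊗k'} ≅ (ℂ^n)^{⊗(k+k')}` of basis vectors
`(e_{i} ⊗ e_{f} ↦ e_{if}`, concatenation of multi-indices). -/
def tensorMap {n k l k' l' : ℕ} (S : MV n k →ₗ[ℂ] MV n l) (T : MV n k' →ₗ[ℂ] MV n l') :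
    MV n (k + k') →ₗ[ℂ] MV n (l + l') :=
  Matrix.mulVecLin (Matrix.of fun (x : Fin (l + l') → Fin n) (y : Fin (k + k') → Fin n) =>
    LinearMap.toMatrix' S (fun a => x (Fin.castAdd l' a)) (fun a => y (Fin.castAdd k' a)) *
    LinearMap.toMatrix' T (fun b => x (Fin.natAdd l b)) (fun b => y (Fin.natAdd k b)))

/-- The adjoint of a linear map `(ℂ^n)^{⊗k} → (ℂ^n)^{⊗l}` with respect to the
standard Hermitian inner products (conjugate-transpose of the matrix in the
standard bases). -/
def adjointMap {n k l : ℕ} (S : MV n k →ₗ[ℂ] MV n l) : MV n l →ₗ[ℂ] MV n k :=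
  Matrix.mulVecLin (LinearMap.toMatrix' S).conjTranspose

/-- The map `ζ : ℂ → (ℂ^n)^{⊗2}`, `1 ↦ Σᵢ eᵢ ⊗ eᵢ`. -/
def zetaMap (n : ℕ) : MV n 0 →ₗ[ℂ] MV n 2 :=
  Matrix.mulVecLin (Matrix.of fun (j : Fin 2 → Fin n) (_ : Fin 0 → Fin n) =>
    if j 0 = j 1 then (1 : ℂ) else 0)

/-- A tensor category with duals (of subspaces of `Hom((ℂ^n)^{⊗k}, (ℂ^n)^{⊗l})`). -/
structure IsTensorCategoryWithDuals (n : ℕ)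
    (H : ∀ k l : ℕ, Submodule ℂ (MV n k →ₗ[ℂ] MV n l)) : Prop where
  tensor_mem : ∀ {k l k' l' : ℕ} (S : MV n k →ₗ[ℂ] MV n l) (T : MV n k' →ₗ[ℂ] MV n l'),
      S ∈ H k l → T ∈ H k' l' → tensorMap S T ∈ H (k + k') (l + l')
  comp_mem : ∀ {k l l' : ℕ} (S : MV n k →ₗ[ℂ] MV n l) (T : MV n l →ₗ[ℂ] MV n l'),
      S ∈ H k l → T ∈ H l l' → T ∘ₗ S ∈ H k l'
  adjoint_mem : ∀ {k l : ℕ} (S : MV n k →ₗ[ℂ] MV n l), S ∈ H k l → adjointMap S ∈ H l k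
  id_mem : LinearMap.id ∈ H 1 1
  zeta_mem : zetaMap n ∈ H 0 2

/-- The collection of subspaces `span{T̂_p^(n) : p ∈ R(k,l)}`. -/
def spanOf (n : ℕ) (R : ∀ k l : ℕ, Set (Part k l)) :
    ∀ k l : ℕ, Submodule ℂ (MV n k →ₗ[ℂ] MV n l) :=
  fun k l => Submodule.span ℂ {T | ∃ p ∈ R k l, T = hatT n p}

/-- All connected tensor products of `p` and `q`. -/
def connTensorSet {k l k' l' : ℕ} (p : Part k l) (q : Part k' l') :
    Set (Part (k + k') (l + l')) :=
  { r | ∃ (i : Fin k → ℕ) (j : Fin l → ℕ) (f : Fin k' → ℕ) (g : Fin l' → ℕ),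
      kerPart i j = p ∧ kerPart f g = q ∧ r = kerPart (Fin.append i f) (Fin.append j g) }

/-- All connected conditioned compositions of `p` and `q`. -/
def connCompSet {k l l' : ℕ} (p : Part k l) (q : Part l l') : Set (Part k l') :=
  { r | ∃ (i : Fin k → ℕ) (h : Fin l → ℕ) (g : Fin l' → ℕ),
      kerPart i h = p ∧ kerPart h g = q ∧ r = kerPart i g }

end GTQG
namespace GTQG

/-- `N_∞`, the normal closure in `ℤ₂^{*∞}` of `sS_∞(N) = {φ(x) : x ∈ N, φ ∈ sS_∞}`. -/
def NinftyEndo (n : ℕ) (N : Subgroup (FreeZ2n n)) : Subgroup FreeZ2 :=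
  Subgroup.normalClosure
    { y | ∃ φ : ℕ → ℕ, FinitelySupported φ ∧ ∃ g ∈ N, y = permEndo φ (incl n g) }

/-- The set `C` of all partitions that are rotations of some `ker(i)` with
`a_i ∈ N_∞`. -/
def rotSetOfGrp (NN : Subgroup FreeZ2) : ∀ k l : ℕ, Set (Part k l) := fun k l =>
  { p | ∃ (k' : ℕ) (i : Fin k' → ℕ), aWord i ∈ NN ∧
      IsRotationOf ⟨k, l, p⟩ ⟨k', 0, kerPart0 i⟩ }
/-! ### Auxiliary lemmas -/

theorem gen_mul_self (i : ℕ) : gen i * gen i = 1 := by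
  rw [gen, ← MonoidHom.map_mul]
  have : (Multiplicative.ofAdd (1 : ZMod 2)) * (Multiplicative.ofAdd (1 : ZMod 2)) = 1 := by
    decide
  rw [this, MonoidHom.map_one]

theorem gen_inv (i : ℕ) : (gen i)⁻¹ = gen i := by
  rw [inv_eq_iff_mul_eq_one, gen_mul_self]

theorem aWord_zero (i : Fin 0 → ℕ) : aWord i = 1 := by
  simp [aWord]

theorem aWord_cons {k : ℕ} (a : ℕ) (f : Fin k → ℕ) :
    aWord (Fin.cons a f) = gen a * aWord f := by
  simp [aWord, List.ofFn_succ]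

theorem aWord_eq_cons {k : ℕ} (f : Fin (k+1) → ℕ) :
    aWord f = gen (f 0) * aWord (fun x => f x.succ) := by
  simp [aWord, List.ofFn_succ]

theorem aWord_append {k k' : ℕ} (f : Fin k → ℕ) (g : Fin k' → ℕ) :
    aWord (Fin.append f g) = aWord f * aWord g := by
  simp [aWord, List.ofFn_add, Fin.append_left, Fin.append_right]

theorem aWord_snoc {k : ℕ} (f : Fin k → ℕ) (a : ℕ) :
    aWord (Fin.snoc f a) = aWord f * gen a := by
  rw [aWord, List.ofFn_succ', List.concat_eq_append, List.prod_append]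
  simp [aWord]

theorem aWord_eq_snoc {k : ℕ} (f : Fin (k+1) → ℕ) :
    aWord f = aWord (fun x => f x.castSucc) * gen (f (Fin.last k)) := by
  have := aWord_snoc (fun x => f (x.castSucc)) (f (Fin.last k))
  rw [← this]
  congr 1
  funext x
  refine Fin.lastCases ?_ ?_ x <;> simp
theorem Setoid.comap_ker {α β γ : Type*} (f : α → β) (g : β → γ) :
    Setoid.comap f (Setoid.ker g) = Setoid.ker (g ∘ f) := by
  apply Setoid.ext; intro a b; exact Iff.rfl

theorem Setoid.ker_inj_comp {α β γ : Type*} (g : α → β) {ι : β → γ}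
    (hι : Function.Injective ι) : Setoid.ker (ι ∘ g) = Setoid.ker g := by
  apply Setoid.ext; intro a b
  exact ⟨fun h => hι h, fun h => congrArg ι h⟩

theorem permEndo_gen (σ : ℕ → ℕ) (i : ℕ) : permEndo σ (gen i) = gen (σ i) := by
  simp [permEndo, gen]

theorem permEndo_aWord (σ : ℕ → ℕ) {k : ℕ} (f : Fin k → ℕ) :
    permEndo σ (aWord f) = aWord (σ ∘ f) := by
  induction k with
  | zero => simp [aWord_zero]
  | succ k ih =>
    rw [aWord_eq_cons, map_mul, permEndo_gen, ih, aWord_eq_cons]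
    rfl

theorem kerPart0_eq {k : ℕ} (i : Fin k → ℕ) (g : Fin 0 → ℕ) :
    kerPart i g = kerPart0 i := by
  have : g = Fin.elim0 := funext fun x => x.elim0
  rw [kerPart, kerPart0, this]

/-- rotation inverses -/
theorem rotDLU_rotULD {k l : ℕ} (p : Part (k+1) l) : rotDLU (rotULD p) = p := by
  apply Setoid.ext; intro a b
  show p (rotULDmap k l (rotDLUmap k l a)) (rotULDmap k l (rotDLUmap k l b)) ↔ p a b
  have h : ∀ x, rotULDmap k l (rotDLUmap k l x) = x := by
    rintro (x | y)
    · refine Fin.cases ?_ ?_ x <;> simp [rotULDmap, rotDLUmap]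
    · simp [rotULDmap, rotDLUmap]
  rw [h, h]

theorem rotULD_rotDLU {k l : ℕ} (p : Part k (l+1)) : rotULD (rotDLU p) = p := by
  apply Setoid.ext; intro a b
  show p (rotDLUmap k l (rotULDmap k l a)) (rotDLUmap k l (rotULDmap k l b)) ↔ p a b
  have h : ∀ x, rotDLUmap k l (rotULDmap k l x) = x := by
    rintro (x | y)
    · simp [rotULDmap, rotDLUmap]
    · refine Fin.cases ?_ ?_ y <;> simp [rotULDmap, rotDLUmap]
  rw [h, h]

theorem rotDRU_rotURD {k l : ℕ} (p : Part (k+1) l) : rotDRU (rotURD p) = p := by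
  apply Setoid.ext; intro a b
  show p (rotURDmap k l (rotDRUmap k l a)) (rotURDmap k l (rotDRUmap k l b)) ↔ p a b
  have h : ∀ x, rotURDmap k l (rotDRUmap k l x) = x := by
    rintro (x | y)
    · refine Fin.lastCases ?_ ?_ x <;> simp [rotURDmap, rotDRUmap]
    · simp [rotURDmap, rotDRUmap]
  rw [h, h]

theorem rotURD_rotDRU {k l : ℕ} (p : Part k (l+1)) : rotURD (rotDRU p) = p := by
  apply Setoid.ext; intro a b
  show p (rotDRUmap k l (rotURDmap k l a)) (rotDRUmap k l (rotURDmap k l b)) ↔ p a b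
  have h : ∀ x, rotDRUmap k l (rotURDmap k l x) = x := by
    rintro (x | y)
    · simp [rotURDmap, rotDRUmap]
    · refine Fin.lastCases ?_ ?_ y <;> simp [rotURDmap, rotDRUmap]
  rw [h, h]
theorem kerPart_comap {k l k' l' : ℕ} (m : Fin k' ⊕ Fin l' → Fin k ⊕ Fin l)
    (f : Fin k → ℕ) (g : Fin l → ℕ) (f' : Fin k' → ℕ) (g' : Fin l' → ℕ)
    (h : ∀ x, Sum.elim f g (m x) = Sum.elim f' g' x) :
    Setoid.comap m (kerPart f g) = kerPart f' g' := by
  rw [kerPart, kerPartA, Setoid.comap_ker]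
  rw [kerPart, kerPartA]
  congr 1
  funext x
  exact h x

/-- The rotation-invariant labelling property. -/
def Lab (NN : Subgroup FreeZ2) (x : Σ k l : ℕ, Part k l) : Prop :=
  ∃ (f : Fin x.1 → ℕ) (g : Fin x.2.1 → ℕ),
    kerPart f g = x.2.2 ∧ aWord f * (aWord g)⁻¹ ∈ NN

theorem conj_gen_mem {NN : Subgroup FreeZ2} [hNN : NN.Normal] {w : FreeZ2} (hw : w ∈ NN)
    (c : ℕ) : gen c * w * gen c ∈ NN := by
  have := hNN.conj_mem w hw (gen c)
  rwa [gen_inv] at this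

theorem lab_of_basicRot {NN : Subgroup FreeZ2} [hNN : NN.Normal] {x y : Σ k l : ℕ, Part k l}
    (h : BasicRot x y) (hx : Lab NN x) : Lab NN y := by
  cases h with
  | @uld k l p =>
    obtain ⟨f, g, hker0, hw⟩ := hx
    have hker : kerPart f g = p := hker0
    refine ⟨fun x => f x.succ, Fin.cons (f 0) g, ?_, ?_⟩
    · show kerPart _ _ = rotULD p
      rw [← hker, rotULD]
      refine (kerPart_comap (rotULDmap k l) f g _ _ ?_).symm
      rintro (x | y)
      · simp [rotULDmap]
      · refine Fin.cases ?_ ?_ y <;> simp [rotULDmap]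
    · have hf' : aWord (fun x => f x.succ) = (gen (f 0))⁻¹ * aWord f := by
        rw [aWord_eq_cons f]; group
      have hrw : aWord (fun x => f x.succ) * (aWord (Fin.cons (f 0) g))⁻¹
          = gen (f 0) * (aWord f * (aWord g)⁻¹) * gen (f 0) := by
        rw [hf', aWord_cons, mul_inv_rev, gen_inv]
        group
      rw [hrw]
      exact conj_gen_mem hw _
  | @dlu k l p =>
    obtain ⟨f, g, hker0, hw⟩ := hx
    have hker : kerPart f g = p := hker0
    refine ⟨Fin.cons (g 0) f, fun y => g y.succ, ?_, ?_⟩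
    · show kerPart _ _ = rotDLU p
      rw [← hker, rotDLU]
      refine (kerPart_comap (rotDLUmap k l) f g _ _ ?_).symm
      rintro (x | y)
      · refine Fin.cases ?_ ?_ x <;> simp [rotDLUmap]
      · simp [rotDLUmap]
    · have hg' : aWord (fun y => g y.succ) = (gen (g 0))⁻¹ * aWord g := by
        rw [aWord_eq_cons g]; group
      have hrw : aWord (Fin.cons (g 0) f) * (aWord (fun y => g y.succ))⁻¹
          = gen (g 0) * (aWord f * (aWord g)⁻¹) * gen (g 0) := by
        rw [hg', mul_inv_rev, inv_inv, aWord_cons]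
        group
      rw [hrw]
      exact conj_gen_mem hw _
  | @urd k l p =>
    obtain ⟨f, g, hker0, hw⟩ := hx
    have hker : kerPart f g = p := hker0
    refine ⟨fun x => f x.castSucc, Fin.snoc g (f (Fin.last k)), ?_, ?_⟩
    · show kerPart _ _ = rotURD p
      rw [← hker, rotURD]
      refine (kerPart_comap (rotURDmap k l) f g _ _ ?_).symm
      rintro (x | y)
      · simp [rotURDmap]
      · refine Fin.lastCases ?_ ?_ y <;> simp [rotURDmap]
    · have hf' : aWord (fun x => f x.castSucc) = aWord f * (gen (f (Fin.last k)))⁻¹ := by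
        rw [aWord_eq_snoc f]; group
      have hrw : aWord (fun x => f x.castSucc) * (aWord (Fin.snoc g (f (Fin.last k))))⁻¹
          = aWord f * (aWord g)⁻¹ := by
        rw [hf', aWord_snoc, mul_inv_rev, gen_inv, mul_assoc,
          ← mul_assoc (gen _), gen_mul_self, one_mul]
      rw [hrw]; exact hw
  | @dru k l p =>
    obtain ⟨f, g, hker0, hw⟩ := hx
    have hker : kerPart f g = p := hker0
    refine ⟨Fin.snoc f (g (Fin.last l)), fun y => g y.castSucc, ?_, ?_⟩
    · show kerPart _ _ = rotDRU p
      rw [← hker, rotDRU]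
      refine (kerPart_comap (rotDRUmap k l) f g _ _ ?_).symm
      rintro (x | y)
      · refine Fin.lastCases ?_ ?_ x <;> simp [rotDRUmap]
      · simp [rotDRUmap]
    · have hg' : aWord (fun y => g y.castSucc) = aWord g * (gen (g (Fin.last l)))⁻¹ := by
        rw [aWord_eq_snoc g]; group
      have hrw : aWord (Fin.snoc f (g (Fin.last l))) * (aWord (fun y => g y.castSucc))⁻¹
          = aWord f * (aWord g)⁻¹ := by
        rw [hg', aWord_snoc, mul_inv_rev, inv_inv, mul_assoc,
          ← mul_assoc (gen _), gen_mul_self, one_mul]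
      rw [hrw]; exact hw
theorem lab_of_isRotationOf {NN : Subgroup FreeZ2} [NN.Normal] {x y : Σ k l : ℕ, Part k l}
    (h : Relation.ReflTransGen BasicRot x y) (hx : Lab NN x) : Lab NN y := by
  induction h with
  | refl => exact hx
  | tail _ step ih => exact lab_of_basicRot step ih

theorem lab_of_mem {NN : Subgroup FreeZ2} [NN.Normal] {k l : ℕ} {p : Part k l}
    (h : p ∈ rotSetOfGrp NN k l) : Lab NN ⟨k, l, p⟩ := by
  obtain ⟨k', i, hi, hrot⟩ := h
  have base : Lab NN ⟨k', 0, kerPart0 i⟩ := by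
    refine ⟨i, Fin.elim0, kerPart0_eq i _, ?_⟩
    rw [aWord_zero, inv_one, mul_one]
    exact hi
  exact lab_of_isRotationOf hrot base

theorem mem_of_lab {NN : Subgroup FreeZ2} [NN.Normal] : ∀ {l k : ℕ} (p : Part k l)
    (f : Fin k → ℕ) (g : Fin l → ℕ), kerPart f g = p → aWord f * (aWord g)⁻¹ ∈ NN →
    p ∈ rotSetOfGrp NN k l := by
  intro l
  induction l with
  | zero =>
    intro k p f g hker hw
    refine ⟨k, f, ?_, ?_⟩
    · rwa [aWord_zero, inv_one, mul_one] at hw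
    · rw [← hker, kerPart0_eq f g]
      exact Relation.ReflTransGen.refl
  | succ l ih =>
    intro k p f g hker hw
    have hker' : kerPart (Fin.snoc f (g (Fin.last l))) (fun y => g y.castSucc)
        = rotDRU p := by
      rw [← hker, rotDRU]
      refine (kerPart_comap (rotDRUmap k l) f g _ _ ?_).symm
      rintro (x | y)
      · refine Fin.lastCases ?_ ?_ x <;> simp [rotDRUmap]
      · simp [rotDRUmap]
    have hw' : aWord (Fin.snoc f (g (Fin.last l))) * (aWord (fun y => g y.castSucc))⁻¹
        ∈ NN := by
      have hg' : aWord (fun y => g y.castSucc) = aWord g * (gen (g (Fin.last l)))⁻¹ := by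
        rw [aWord_eq_snoc g]; group
      have hrw : aWord (Fin.snoc f (g (Fin.last l))) * (aWord (fun y => g y.castSucc))⁻¹
          = aWord f * (aWord g)⁻¹ := by
        rw [hg', aWord_snoc, mul_inv_rev, inv_inv, mul_assoc,
          ← mul_assoc (gen _), gen_mul_self, one_mul]
      rw [hrw]; exact hw
    obtain ⟨k'', i, hi, hrot⟩ := ih (rotDRU p) _ _ hker' hw'
    refine ⟨k'', i, hi, hrot.tail ?_⟩
    have := BasicRot.urd (rotDRU p)
    rwa [rotURD_rotDRU] at this

theorem mem_rotSet_iff {NN : Subgroup FreeZ2} [NN.Normal] {k l : ℕ} {p : Part k l} :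
    p ∈ rotSetOfGrp NN k l ↔ ∃ (f : Fin k → ℕ) (g : Fin l → ℕ),
      kerPart f g = p ∧ aWord f * (aWord g)⁻¹ ∈ NN := by
  constructor
  · exact fun h => lab_of_mem h
  · rintro ⟨f, g, hker, hw⟩
    exact mem_of_lab p f g hker hw
theorem permEndo_comp (φ ψ : ℕ → ℕ) :
    (permEndo φ).comp (permEndo ψ) = permEndo (φ ∘ ψ) := by
  apply Monoid.CoprodI.ext_hom
  intro i
  ext m
  simp [permEndo, Monoid.CoprodI.lift_of]

theorem permEndo_id : permEndo id = MonoidHom.id FreeZ2 := by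
  apply Monoid.CoprodI.ext_hom
  intro i
  ext m
  simp [permEndo, Monoid.CoprodI.lift_of]

theorem FinitelySupported.comp {φ ψ : ℕ → ℕ} (hφ : FinitelySupported φ)
    (hψ : FinitelySupported ψ) : FinitelySupported (φ ∘ ψ) := by
  refine Set.Finite.subset (hφ.union hψ) ?_
  intro x hx
  by_contra hc
  simp only [Set.mem_union, Set.mem_setOf_eq, not_or, not_not] at hc
  exact hx (by simp [Function.comp, hc.2, hc.1])

theorem ninftyEndo_perm_inv (n : ℕ) (N : Subgroup (FreeZ2n n)) (φ : ℕ → ℕ)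
    (hφ : FinitelySupported φ) {x : FreeZ2} (hx : x ∈ NinftyEndo n N) :
    permEndo φ x ∈ NinftyEndo n N := by
  have : NinftyEndo n N ≤ Subgroup.comap (permEndo φ) (NinftyEndo n N) := by
    haveI : (NinftyEndo n N).Normal := Subgroup.normalClosure_normal
    haveI : (Subgroup.comap (permEndo φ) (NinftyEndo n N)).Normal :=
      Subgroup.Normal.comap ‹(NinftyEndo n N).Normal› _
    apply Subgroup.normalClosure_le_normal
    rintro y ⟨ψ, hψ, g, hg, rfl⟩
    show permEndo φ (permEndo ψ (incl n g)) ∈ NinftyEndo n N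
    have hcomp : permEndo φ (permEndo ψ (incl n g)) = permEndo (φ ∘ ψ) (incl n g) :=
      DFunLike.congr_fun (permEndo_comp φ ψ) (incl n g)
    rw [hcomp]
    exact Subgroup.subset_normalClosure ⟨φ ∘ ψ, hφ.comp hψ, g, hg, rfl⟩
  exact this hx

/-- Relabelling along a coarser labelling. -/
theorem relabel {NN : Subgroup FreeZ2}
    (hperm : ∀ φ : ℕ → ℕ, FinitelySupported φ → ∀ x ∈ NN, permEndo φ x ∈ NN)
    {k l : ℕ} (f0 : Fin k → ℕ) (g0 : Fin l → ℕ) (f' : Fin k → ℕ) (g' : Fin l → ℕ)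
    (hle : kerPart f0 g0 ≤ kerPart f' g') (hw : aWord f0 * (aWord g0)⁻¹ ∈ NN) :
    aWord f' * (aWord g')⁻¹ ∈ NN := by
  set h0 : Fin k ⊕ Fin l → ℕ := Sum.elim f0 g0 with hh0
  set h' : Fin k ⊕ Fin l → ℕ := Sum.elim f' g' with hh'
  set φ : ℕ → ℕ := fun x => if hx : ∃ z, h0 z = x then h' hx.choose else x with hφdef
  have key : ∀ z, φ (h0 z) = h' z := by
    intro z
    have hx : ∃ z', h0 z' = h0 z := ⟨z, rfl⟩
    have h1 : φ (h0 z) = h' hx.choose := dif_pos hx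
    have h2 : h0 hx.choose = h0 z := hx.choose_spec
    have h3 : h' hx.choose = h' z := hle h2
    rw [h1, h3]
  have hfin : FinitelySupported φ := by
    refine Set.Finite.subset (Set.finite_range h0) ?_
    intro x hx
    by_contra hc
    exact hx (dif_neg (by simpa [Set.range] using hc))
  have := hperm φ hfin _ hw
  rw [map_mul, map_inv, permEndo_aWord, permEndo_aWord] at this
  have hf : φ ∘ f0 = f' := funext fun x => key (Sum.inl x)
  have hg : φ ∘ g0 = g' := funext fun x => key (Sum.inr x)
  rwa [hf, hg] at this

theorem word_of_mem {NN : Subgroup FreeZ2} [NN.Normal]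
    (hperm : ∀ φ : ℕ → ℕ, FinitelySupported φ → ∀ x ∈ NN, permEndo φ x ∈ NN)
    {k l : ℕ} {p : Part k l} (h : p ∈ rotSetOfGrp NN k l)
    (f' : Fin k → ℕ) (g' : Fin l → ℕ) (hle : p ≤ kerPart f' g') :
    aWord f' * (aWord g')⁻¹ ∈ NN := by
  obtain ⟨f0, g0, hker, hw⟩ := lab_of_mem h
  exact relabel hperm f0 g0 f' g' (by rw [hker]; exact hle) hw

theorem exists_aWord (x : FreeZ2) : ∃ (k : ℕ) (i : Fin k → ℕ), x = aWord i := by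
  induction x using Monoid.CoprodI.induction_on with
  | one => exact ⟨0, Fin.elim0, (aWord_zero _).symm⟩
  | of i m =>
    have hm : m = 1 ∨ m = Multiplicative.ofAdd (1 : ZMod 2) := by revert m; decide
    rcases hm with rfl | rfl
    · exact ⟨0, Fin.elim0, by rw [aWord_zero, map_one]⟩
    · refine ⟨1, fun _ => i, ?_⟩
      rw [aWord_eq_cons, aWord_zero, mul_one]
      rfl
  | mul x y hx hy =>
    obtain ⟨k, i, rfl⟩ := hx
    obtain ⟨k', j, rfl⟩ := hy
    exact ⟨k + k', Fin.append i j, (aWord_append i j).symm⟩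
section CatAxioms

variable {NN : Subgroup FreeZ2} [hNNn : NN.Normal]
  (hperm : ∀ φ : ℕ → ℕ, FinitelySupported φ → ∀ x ∈ NN, permEndo φ x ∈ NN)

theorem aWord_three (a b c : ℕ) : aWord ![a, b, c] = gen a * (gen b * (gen c * 1)) := by
  rw [show (![a,b,c] : Fin 3 → ℕ) = Fin.cons a (Fin.cons b (Fin.cons c ![])) from rfl,
    aWord_cons, aWord_cons, aWord_cons, aWord_zero]

theorem pair_mem_rotSet : pairPart ∈ rotSetOfGrp NN 0 2 := by
  apply mem_of_lab pairPart Fin.elim0 (fun _ => (1 : ℕ)) rfl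
  have h2 : aWord (fun _ : Fin 2 => (1 : ℕ)) = 1 := by
    rw [show (fun _ : Fin 2 => (1 : ℕ)) = Fin.cons 1 (Fin.cons 1 ![]) from
      funext fun x => by refine Fin.cases rfl (fun y => ?_) x; exact Fin.cases rfl (fun z => z.elim0) y,
      aWord_cons, aWord_cons, aWord_zero, mul_one, gen_mul_self]
  rw [aWord_zero, h2, inv_one, mul_one]
  exact one_mem NN

theorem id_mem_rotSet : idPart ∈ rotSetOfGrp NN 1 1 := by
  apply mem_of_lab idPart (fun _ => (1 : ℕ)) (fun _ => (1 : ℕ)) rfl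
  have h : aWord (fun _ : Fin 1 => (1 : ℕ)) = gen 1 := by
    rw [aWord_eq_cons, aWord_zero, mul_one]
  rw [h]
  rw [show gen 1 * (gen 1)⁻¹ = 1 by group]
  exact one_mem NN

theorem invol_mem_rotSet {k l : ℕ} {p : Part k l} (hp : p ∈ rotSetOfGrp NN k l) :
    invol p ∈ rotSetOfGrp NN l k := by
  obtain ⟨f, g, hker, hw⟩ := lab_of_mem hp
  have hker' : kerPart f g = p := hker
  apply mem_of_lab (invol p) g f
  · rw [← hker', invol]
    refine (kerPart_comap Sum.swap f g g f ?_).symm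
    rintro (x | y) <;> rfl
  · rw [show aWord g * (aWord f)⁻¹ = (aWord f * (aWord g)⁻¹)⁻¹ by group]
    exact inv_mem hw

end CatAxioms
section CatAxioms2

variable {NN : Subgroup FreeZ2} [hNNn : NN.Normal]

theorem ker_label {α : Type*} (s : Setoid α) {ι : Quotient s → ℕ}
    (hι : Function.Injective ι) :
    Setoid.ker (fun a => ι (Quotient.mk s a)) = s := by
  apply Setoid.ext
  intro a b
  show ι (Quotient.mk s a) = ι (Quotient.mk s b) ↔ s a b
  exact ⟨fun h => Quotient.exact (hι h), fun h => congrArg ι (Quotient.sound h)⟩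

theorem tensor_mem_rotSet
    (hperm : ∀ φ : ℕ → ℕ, FinitelySupported φ → ∀ x ∈ NN, permEndo φ x ∈ NN)
    {k l k' l' : ℕ} {p : Part k l} {q : Part k' l'}
    (hp : p ∈ rotSetOfGrp NN k l) (hq : q ∈ rotSetOfGrp NN k' l') :
    tensorPart p q ∈ rotSetOfGrp NN (k + k') (l + l') := by
  obtain ⟨ι, hι⟩ := Countable.exists_injective_nat (Quotient p ⊕ Quotient q)
  set fP : Fin k → ℕ := fun a => ι (Sum.inl (Quotient.mk p (Sum.inl a))) with hfP
  set gP : Fin l → ℕ := fun b => ι (Sum.inl (Quotient.mk p (Sum.inr b))) with hgP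
  set fQ : Fin k' → ℕ := fun a => ι (Sum.inr (Quotient.mk q (Sum.inl a))) with hfQ
  set gQ : Fin l' → ℕ := fun b => ι (Sum.inr (Quotient.mk q (Sum.inr b))) with hgQ
  have hinl : Function.Injective (fun c : Quotient p => ι (Sum.inl c)) :=
    fun a b h => Sum.inl_injective (hι h)
  have hinr : Function.Injective (fun c : Quotient q => ι (Sum.inr c)) :=
    fun a b h => Sum.inr_injective (hι h)
  have hkerP : kerPart fP gP = p := by
    rw [kerPart, kerPartA,
      show Sum.elim fP gP = fun x => ι (Sum.inl (Quotient.mk p x)) from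
        funext fun x => by cases x <;> rfl]
    exact ker_label p hinl
  have hkerQ : kerPart fQ gQ = q := by
    rw [kerPart, kerPartA,
      show Sum.elim fQ gQ = fun x => ι (Sum.inr (Quotient.mk q x)) from
        funext fun x => by cases x <;> rfl]
    exact ker_label q hinr
  set J : Fin (k + k') ⊕ Fin (l + l') → (Fin k ⊕ Fin l) ⊕ (Fin k' ⊕ Fin l') :=
    Sum.elim
      (fun z => Fin.addCases (fun a => Sum.inl (Sum.inl a)) (fun b => Sum.inr (Sum.inl b)) z)
      (fun z => Fin.addCases (fun a => Sum.inl (Sum.inr a)) (fun b => Sum.inr (Sum.inr b)) z)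
    with hJ
  have key : ∀ x, Sum.elim (Fin.append fP fQ) (Fin.append gP gQ) x
      = ι (Sum.map (Quotient.mk p) (Quotient.mk q) (J x)) := by
    rintro (z | z) <;> refine Fin.addCases (fun a => ?_) (fun b => ?_) z <;>
      simp [hJ, Fin.append_left, Fin.append_right, Fin.addCases_left, Fin.addCases_right,
        hfP, hgP, hfQ, hgQ, Sum.map]
  have hker : kerPart (Fin.append fP fQ) (Fin.append gP gQ) = tensorPart p q := by
    apply Setoid.ext
    intro x y
    show Sum.elim (Fin.append fP fQ) (Fin.append gP gQ) x
        = Sum.elim (Fin.append fP fQ) (Fin.append gP gQ) y ↔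
      Sum.map (Quotient.mk p) (Quotient.mk q) (J x)
        = Sum.map (Quotient.mk p) (Quotient.mk q) (J y)
    rw [key, key]
    exact ⟨fun h => hι h, fun h => congrArg ι h⟩
  apply mem_of_lab _ _ _ hker
  have w1 : aWord fP * (aWord gP)⁻¹ ∈ NN :=
    word_of_mem hperm hp fP gP (le_of_eq hkerP.symm)
  have w2 : aWord fQ * (aWord gQ)⁻¹ ∈ NN :=
    word_of_mem hperm hq fQ gQ (le_of_eq hkerQ.symm)
  rw [aWord_append, aWord_append,
    show aWord fP * aWord fQ * (aWord gP * aWord gQ)⁻¹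
      = (aWord fP * (aWord fQ * (aWord gQ)⁻¹) * (aWord fP)⁻¹) * (aWord fP * (aWord gP)⁻¹)
      from by group]
  exact mul_mem (hNNn.conj_mem _ w2 _) w1

theorem comp_mem_rotSet
    (hperm : ∀ φ : ℕ → ℕ, FinitelySupported φ → ∀ x ∈ NN, permEndo φ x ∈ NN)
    {k l l' : ℕ} {p : Part k l} {q : Part l l'}
    (hp : p ∈ rotSetOfGrp NN k l) (hq : q ∈ rotSetOfGrp NN l l') :
    compPart p q ∈ rotSetOfGrp NN k l' := by
  set s : Setoid (CompCarrier k l l') := middleJoin p q with hs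
  obtain ⟨ι, hι⟩ := Countable.exists_injective_nat (Quotient s)
  set f : Fin k → ℕ := fun a => ι (Quotient.mk s (Sum.inl a)) with hf
  set m : Fin l → ℕ := fun b => ι (Quotient.mk s (Sum.inr (Sum.inl b))) with hm
  set g : Fin l' → ℕ := fun c => ι (Quotient.mk s (Sum.inr (Sum.inr c))) with hg
  have hker : kerPart f g = compPart p q := by
    apply Setoid.ext
    intro x y
    show Sum.elim f g x = Sum.elim f g y ↔ s (Sum.map id Sum.inr x) (Sum.map id Sum.inr y)
    have key : ∀ x : Fin k ⊕ Fin l', Sum.elim f g x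
        = ι (Quotient.mk s (Sum.map id Sum.inr x)) := by rintro (a | c) <;> rfl
    rw [key, key]
    exact ⟨fun h => Quotient.exact (hι h), fun h => congrArg ι (Quotient.sound h)⟩
  have hle1 : p ≤ kerPart f m := by
    intro u v huv
    show Sum.elim f m u = Sum.elim f m v
    have key : ∀ u : Fin k ⊕ Fin l, Sum.elim f m u = ι (Quotient.mk s (topIncl u)) := by
      rintro (a | b) <;> rfl
    rw [key, key]
    refine congrArg ι (Quotient.sound ?_)
    exact Relation.EqvGen.rel _ _ (Or.inl ⟨u, v, huv, rfl, rfl⟩)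
  have hle2 : q ≤ kerPart m g := by
    intro u v huv
    show Sum.elim m g u = Sum.elim m g v
    have key : ∀ u : Fin l ⊕ Fin l', Sum.elim m g u = ι (Quotient.mk s (botIncl u)) := by
      rintro (a | b) <;> rfl
    rw [key, key]
    refine congrArg ι (Quotient.sound ?_)
    exact Relation.EqvGen.rel _ _ (Or.inr ⟨u, v, huv, rfl, rfl⟩)
  apply mem_of_lab _ _ _ hker
  have w1 : aWord f * (aWord m)⁻¹ ∈ NN := word_of_mem hperm hp f m hle1
  have w2 : aWord m * (aWord g)⁻¹ ∈ NN := word_of_mem hperm hq m g hle2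
  rw [show aWord f * (aWord g)⁻¹
      = (aWord f * (aWord m)⁻¹) * (aWord m * (aWord g)⁻¹) from by group]
  exact mul_mem w1 w2

theorem pHat_mem_rotSet : pHat ∈ rotSetOfGrp NN 3 3 := by
  apply mem_of_lab pHat ![1, 1, 2] ![2, 1, 1] rfl
  have h1 : aWord ![(1:ℕ), 1, 2] = gen 2 := by
    rw [aWord_three, mul_one, ← mul_assoc, gen_mul_self, one_mul]
  have h2 : aWord ![(2:ℕ), 1, 1] = gen 2 := by
    rw [aWord_three, mul_one, gen_mul_self, mul_one]
  rw [h1, h2, show gen 2 * (gen 2)⁻¹ = 1 from by group]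
  exact one_mem NN

end CatAxioms2
/-- The retraction `ℤ₂^{*∞} → ℤ₂^{*n}` collapsing all indices `≥ n` to `0`. -/
def retr (n : ℕ) (hn : 0 < n) : FreeZ2 →* FreeZ2n n :=
  Monoid.CoprodI.lift (fun i => Monoid.CoprodI.of (M := fun _ : Fin n => Z2)
    (i := if h : i < n then ⟨i, h⟩ else ⟨0, hn⟩))

theorem retr_incl (n : ℕ) (hn : 0 < n) :
    (retr n hn).comp (incl n) = MonoidHom.id (FreeZ2n n) := by
  apply Monoid.CoprodI.ext_hom
  intro i
  ext mm
  simp [retr, incl, Monoid.CoprodI.lift_of, i.isLt]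

theorem retr_mem (n : ℕ) (hn : 0 < n) (N : Subgroup (FreeZ2n n)) (hnorm : N.Normal)
    (hinv : ∀ φ : Fin n → Fin n, ∀ g ∈ N, permEndon φ g ∈ N)
    {x : FreeZ2} (hx : x ∈ NinftyEndo n N) : retr n hn x ∈ N := by
  have hle : NinftyEndo n N ≤ Subgroup.comap (retr n hn) N := by
    haveI : (Subgroup.comap (retr n hn) N).Normal := hnorm.comap _
    apply Subgroup.normalClosure_le_normal
    rintro y ⟨φ, hφ, g, hg, rfl⟩
    show retr n hn (permEndo φ (incl n g)) ∈ N
    set ψ : Fin n → Fin n :=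
      fun j => if h : φ (j : ℕ) < n then ⟨φ (j : ℕ), h⟩ else ⟨0, hn⟩ with hψ
    have hcomp : (retr n hn).comp ((permEndo φ).comp (incl n)) = permEndon ψ := by
      apply Monoid.CoprodI.ext_hom
      intro i
      ext mm
      simp [retr, permEndo, permEndon, incl, Monoid.CoprodI.lift_of, hψ]
    have hgg := DFunLike.congr_fun hcomp g
    simp only [MonoidHom.comp_apply] at hgg
    rw [hgg]
    exact hinv ψ g hg
  exact hle hx

theorem finitelySupported_id : FinitelySupported (id : ℕ → ℕ) := by
  have h : {x : ℕ | id x ≠ x} = ∅ := by ext x; simp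
  rw [FinitelySupported, h]
  exact Set.finite_empty
theorem rotations_groupTheoreticalCategory (n : ℕ) (hn : 0 < n)
    (N : Subgroup (FreeZ2n n)) (hnorm : N.Normal)
    (hinv : ∀ φ : Fin n → Fin n, ∀ g ∈ N, permEndon φ g ∈ N) :
    IsCategoryOfPartitions (rotSetOfGrp (NinftyEndo n N)) ∧
    pHat ∈ rotSetOfGrp (NinftyEndo n N) 3 3 ∧
    Finfty (rotSetOfGrp (NinftyEndo n N)) = (NinftyEndo n N : Set FreeZ2) ∧
    Finfty (rotSetOfGrp (NinftyEndo n N)) ∩ Set.range (incl n)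
      = incl n '' (N : Set (FreeZ2n n)) := by
  haveI hNNnormal : (NinftyEndo n N).Normal := Subgroup.normalClosure_normal
  have hperm : ∀ φ : ℕ → ℕ, FinitelySupported φ →
      ∀ x ∈ NinftyEndo n N, permEndo φ x ∈ NinftyEndo n N :=
    fun φ hφ x hx => ninftyEndo_perm_inv n N φ hφ hx
  have hFin : Finfty (rotSetOfGrp (NinftyEndo n N)) = (NinftyEndo n N : Set FreeZ2) := by
    ext x
    constructor
    · rintro ⟨k, i, hmem, rfl⟩
      have h := word_of_mem hperm hmem i Fin.elim0
        (le_of_eq (kerPart0_eq i Fin.elim0).symm)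
      rwa [aWord_zero, inv_one, mul_one] at h
    · intro hx
      obtain ⟨k, i, rfl⟩ := exists_aWord x
      exact ⟨k, i, mem_of_lab _ i Fin.elim0 (kerPart0_eq i Fin.elim0)
        (by rwa [aWord_zero, inv_one, mul_one]), rfl⟩
  refine ⟨⟨pair_mem_rotSet, id_mem_rotSet, fun h => invol_mem_rotSet h,
    fun hp hq => tensor_mem_rotSet hperm hp hq,
    fun hp hq => comp_mem_rotSet hperm hp hq⟩, pHat_mem_rotSet, hFin, ?_⟩
  rw [hFin]
  ext x
  constructor
  · rintro ⟨hx1, v, rfl⟩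
    have hv : retr n hn (incl n v) = v := DFunLike.congr_fun (retr_incl n hn) v
    have hmem : retr n hn (incl n v) ∈ N := retr_mem n hn N hnorm hinv hx1
    rw [hv] at hmem
    exact ⟨v, hmem, rfl⟩
  · rintro ⟨v, hv, rfl⟩
    refine ⟨?_, ⟨v, rfl⟩⟩
    apply Subgroup.subset_normalClosure
    exact ⟨id, finitelySupported_id, v, hv, (DFunLike.congr_fun permEndo_id (incl n v)).symm⟩

end GTQG
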